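/- Define c_δ := (∫_{δ/2}^δ w_r^{−2} dr)/(2·∫_0^T w_r^{−2} dr), so that 0 < c_δ < 1/2. Then for every γ ∈ (0, c_δ) and every t ∈ [δ/2, T], one has (1−γ)·∫_{δ/2}^t w_s^{−2} ds ≥ max(r_δ − r_t, 0) + (1/2)·(r_{δ/2} − r_{min(t,δ)}). -/

import Mathlib

/-- With `c_δ := (∫_{δ/2}^δ w_r⁻² dr)/(2∫_0^T w_r⁻² dr)` one has `0 < c_δ < 1/2`, and for
every `γ ∈ (0, c_δ)` and `t ∈ [δ/2, T]`:
`(1−γ)·∫_{δ/2}^t w_s⁻² ds ≥ max(r_δ − r_t, 0) + (1/2)·(r_{δ/2} − r_{min(t,δ)})`. -/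
theorem escape_rate_lower_bound
    (T κ δ : ℝ) (hT : 0 < T) (hδ : δ ∈ Set.Ioo 0 T)
    (η w r : ℝ → ℝ)
    (hη : ∀ t ∈ Set.Icc (0:ℝ) T,
      HasDerivWithinAt η (η t ^ 2 - 2 * κ * η t - 1) (Set.Icc (0:ℝ) T) t)
    (hηT : η T = 1)
    (hw : ∀ t, w t = Real.exp (∫ s in t..T, (-κ + η s)))
    (hr : ∀ t, r t = ∫ s in t..T, ((w s) ^ 2)⁻¹)
    (hrδ : 0 < r δ)
    (cδ : ℝ)
    (hcδ : cδ = (∫ s in (δ/2)..δ, ((w s) ^ 2)⁻¹) / (2 * ∫ s in (0:ℝ)..T, ((w s) ^ 2)⁻¹)) :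
    0 < cδ ∧ cδ < 1 / 2 ∧
    ∀ γ ∈ Set.Ioo (0:ℝ) cδ, ∀ t ∈ Set.Icc (δ/2) T,
      max (r δ - r t) 0 + 1 / 2 * (r (δ/2) - r (min t δ)) ≤
        (1 - γ) * ∫ s in (δ/2)..t, ((w s) ^ 2)⁻¹ := by
  obtain ⟨hδ0, hδT⟩ := hδ
  set f : ℝ → ℝ := fun s => ((w s) ^ 2)⁻¹ with hf
  -- positivity of f
  have hfpos : ∀ s, 0 < f s := by
    intro s
    simp only [hf, hw s]
    positivity
  -- continuity of η on [0,T]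
  have hηc : ContinuousOn η (Set.Icc (0:ℝ) T) := fun t ht =>
    (hη t ht).continuousWithinAt
  have hgc : ContinuousOn (fun s => -κ + η s) (Set.Icc (0:ℝ) T) :=
    continuousOn_const.add hηc
  have hIcc : Set.uIcc (0:ℝ) T = Set.Icc 0 T := Set.uIcc_of_le hT.le
  have hgint : MeasureTheory.IntegrableOn (fun s => -κ + η s) (Set.uIcc (0:ℝ) T) := by
    rw [hIcc]
    exact hgc.integrableOn_compact isCompact_Icc
  have hFc : ContinuousOn (fun x => ∫ s in x..T, (-κ + η s)) (Set.Icc (0:ℝ) T) := by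
    have := intervalIntegral.continuousOn_primitive_interval_left (a := (0:ℝ)) (b := T) hgint
    rwa [hIcc] at this
  have hwc : ContinuousOn w (Set.Icc (0:ℝ) T) := by
    have : ContinuousOn (fun x => Real.exp (∫ s in x..T, (-κ + η s))) (Set.Icc (0:ℝ) T) :=
      Real.continuous_exp.comp_continuousOn hFc
    exact this.congr fun x _ => hw x
  have hfc : ContinuousOn f (Set.Icc (0:ℝ) T) := by
    apply ((hwc.pow 2).inv₀ ?_)
    intro x _
    rw [Pi.pow_apply, hw x]; positivity
  have hint : ∀ a b : ℝ, a ∈ Set.Icc (0:ℝ) T → b ∈ Set.Icc (0:ℝ) T →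
      IntervalIntegrable f MeasureTheory.volume a b := by
    intro a b ha hb
    apply (hfc.mono (Set.uIcc_subset_Icc ha hb)).intervalIntegrable
  have hδ2 : (0:ℝ) < δ / 2 := by linarith
  have hmemδ2 : δ / 2 ∈ Set.Icc (0:ℝ) T := ⟨hδ2.le, by linarith⟩
  have hmemδ : δ ∈ Set.Icc (0:ℝ) T := ⟨hδ0.le, hδT.le⟩
  have hmem0 : (0:ℝ) ∈ Set.Icc (0:ℝ) T := ⟨le_refl _, hT.le⟩
  have hmemT : T ∈ Set.Icc (0:ℝ) T := ⟨hT.le, le_refl _⟩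
  set D : ℝ := ∫ s in (0:ℝ)..T, f s with hD
  set B : ℝ := ∫ s in (δ/2)..δ, f s with hB
  have hBpos : 0 < B :=
    intervalIntegral.intervalIntegral_pos_of_pos (hint _ _ hmemδ2 hmemδ)
      hfpos (by linarith)
  -- monotone integrals
  have hmono : ∀ a b : ℝ, 0 ≤ a → a ≤ b → b ≤ T →
      (∫ s in a..b, f s) ≤ D := by
    intro a b h0 hab hbT
    apply intervalIntegral.integral_mono_interval h0 hab hbT
    · exact MeasureTheory.ae_of_all _ fun x => (hfpos x).le
    · exact hint _ _ hmem0 hmemT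
  -- r δ = ∫ δ..T
  have hrδ' : r δ = ∫ s in δ..T, f s := hr δ
  have hBrδD : B + r δ ≤ D := by
    have hsplit : B + (∫ s in δ..T, f s) = ∫ s in (δ/2)..T, f s :=
      intervalIntegral.integral_add_adjacent_intervals
        (hint _ _ hmemδ2 hmemδ) (hint _ _ hmemδ hmemT)
    rw [hrδ', hsplit]
    exact hmono _ _ hδ2.le (by linarith) le_rfl
  have hDpos : 0 < D := lt_of_lt_of_le hrδ (by linarith)
  have hcδpos : 0 < cδ := by
    rw [hcδ]
    exact div_pos hBpos (by simpa [hD] using mul_pos two_pos hDpos)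
  have hcδlt : cδ < 1 / 2 := by
    rw [hcδ]
    rw [div_lt_iff₀ (by simpa [hD] using mul_pos two_pos hDpos)]
    nlinarith
  refine ⟨hcδpos, hcδlt, ?_⟩
  rintro γ ⟨hγ0, hγc⟩ t ⟨ht1, ht2⟩
  have hmemt : t ∈ Set.Icc (0:ℝ) T := ⟨by linarith, ht2⟩
  -- rewrite differences of r as integrals
  have hrdiff : ∀ a b : ℝ, a ∈ Set.Icc (0:ℝ) T → b ∈ Set.Icc (0:ℝ) T →
      r a - r b = ∫ s in a..b, f s := by
    intro a b ha hb
    have : (∫ s in a..b, f s) + ∫ s in b..T, f s = ∫ s in a..T, f s :=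
      intervalIntegral.integral_add_adjacent_intervals
        (hint _ _ ha hb) (hint _ _ hb hmemT)
    rw [hr a, hr b]
    linarith
  have hγhalf : γ < 1 / 2 := lt_trans hγc hcδlt
  rcases le_total t δ with hcase | hcase
  · -- t ≤ δ
    have hmin : min t δ = t := min_eq_left hcase
    have hmax : r δ - r t ≤ 0 := by
      rw [hrdiff δ t hmemδ hmemt, intervalIntegral.integral_symm]
      exact neg_nonpos.mpr (intervalIntegral.integral_nonneg hcase
        fun x _ => (hfpos x).le)
    rw [hmin, max_eq_right hmax, hrdiff _ _ hmemδ2 hmemt]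
    have hA : (0:ℝ) ≤ ∫ s in (δ/2)..t, f s :=
      intervalIntegral.integral_nonneg (by linarith) fun x _ => (hfpos x).le
    nlinarith
  · -- δ ≤ t
    have hmin : min t δ = δ := min_eq_right hcase
    set C : ℝ := ∫ s in δ..t, f s with hC
    have hCnonneg : 0 ≤ C :=
      intervalIntegral.integral_nonneg hcase fun x _ => (hfpos x).le
    have hmax : 0 ≤ r δ - r t := by
      rw [hrdiff δ t hmemδ hmemt]; exact hCnonneg
    have hsplit : (∫ s in (δ/2)..t, f s) = B + C :=
      (intervalIntegral.integral_add_adjacent_intervals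
        (hint _ _ hmemδ2 hmemδ) (hint _ _ hmemδ hmemt)).symm
    have hBC : B + C ≤ D := by
      rw [← hsplit]; exact hmono _ _ hδ2.le (by linarith) ht2
    have hkey : γ * (B + C) ≤ γ * D := by
      exact mul_le_mul_of_nonneg_left hBC hγ0.le
    have hγD : γ * D < B / 2 := by
      have : γ * D < cδ * D := by
        exact mul_lt_mul_of_pos_right hγc hDpos
      calc γ * D < cδ * D := this
        _ = B / 2 := by
            rw [hcδ]; field_simp [← hD, ← hB]
    rw [hmin, max_eq_left hmax, hrdiff δ t hmemδ hmemt, hrdiff _ _ hmemδ2 hmemδ]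
    simp only [← hf, ← hB, ← hC] at *
    rw [hsplit]
    nlinarith
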